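/- arXiv:1111.7158 — 4 statements merged into one kernel-verified Lean document; each statement's English description precedes it below -/
import Mathlib

section
/- Let X be a compact metric space and let μ and ν be Borel probability measures on X. Then the relative entropy satisfies the Donsker–Varadhan variational formula H_μ(ν) = sup_{g ∈ C(X,ℝ)} ( ∫_X g dν − log ∫_X e^g dμ ), where the supremum ranges over all continuous real-valued functions g on X and the equality holds in [0, +∞]. -/
open MeasureTheory ENNReal Real

namespace DVaux

/-- clamp to `[-c, c]` -/
noncomputable def clamp (c a : ℝ) : ℝ := max (-c) (min c a)

lemma clamp_lipschitz (c a b : ℝ) : |clamp c a - clamp c b| ≤ |a - b| := by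
  unfold clamp
  rw [max_comm (-c) (min c a), max_comm (-c) (min c b)]
  refine (abs_max_sub_max_le_abs _ _ _).trans ?_
  refine (abs_min_sub_min_le_max c a c b).trans ?_
  simp

lemma clamp_eq_self {c a : ℝ} (h : |a| ≤ c) : clamp c a = a := by
  rw [abs_le] at h
  unfold clamp
  rw [min_eq_right h.2, max_eq_right h.1]

lemma abs_clamp_le {c a : ℝ} (hc : 0 ≤ c) : |clamp c a| ≤ c := by
  unfold clamp
  rw [abs_le]
  exact ⟨le_max_left _ _, max_le (by linarith) (min_le_left _ _)⟩

lemma exp_sub_exp_le {a b c : ℝ} (ha : a ≤ c) (hb : b ≤ c) :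
    Real.exp a - Real.exp b ≤ Real.exp c * |a - b| := by
  rcases le_total a b with h | h
  · have h1 : Real.exp a ≤ Real.exp b := Real.exp_le_exp.2 h
    have h2 : 0 ≤ Real.exp c * |a - b| := by positivity
    linarith
  · rw [abs_of_nonneg (by linarith)]
    have h1 : (b - a) + 1 ≤ Real.exp (b - a) := Real.add_one_le_exp _
    have h2 : Real.exp b = Real.exp a * Real.exp (b - a) := by
      rw [← Real.exp_add]; ring_nf
    have h3 : Real.exp a * ((b - a) + 1) ≤ Real.exp b := by
      rw [h2]; exact mul_le_mul_of_nonneg_left h1 (Real.exp_pos a).le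
    have h4 : Real.exp a ≤ Real.exp c := Real.exp_le_exp.2 ha
    nlinarith [Real.exp_pos a]

lemma log_add_le {x d : ℝ} (hx : 0 < x) (hd : 0 ≤ d) :
    Real.log (x + d) ≤ Real.log x + d / x := by
  have h : Real.log (x + d) - Real.log x = Real.log ((x + d) / x) := by
    rw [Real.log_div (by linarith) hx.ne']
  have h2 : Real.log ((x + d) / x) ≤ (x + d) / x - 1 :=
    Real.log_le_sub_one_of_pos (by positivity)
  have h3 : (x + d) / x - 1 = d / x := by field_simp; ring
  linarith

lemma ofReal_le_iSup_of_forall_eps {ι : Type*} (a : ℝ) (F : ι → ℝ)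
    (h : ∀ ε : ℝ, 0 < ε → ∃ i, a - ε ≤ F i) :
    ENNReal.ofReal a ≤ ⨆ i, ENNReal.ofReal (F i) := by
  refine ENNReal.le_of_forall_pos_le_add fun ε hε _ => ?_
  obtain ⟨i, hi⟩ := h ε (by exact_mod_cast hε)
  calc ENNReal.ofReal a ≤ ENNReal.ofReal (F i + ε) := by
        apply ENNReal.ofReal_le_ofReal; linarith
    _ ≤ ENNReal.ofReal (F i) + ENNReal.ofReal ε := ENNReal.ofReal_add_le
    _ ≤ (⨆ i, ENNReal.ofReal (F i)) + ε := by
        gcongr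
        · exact le_iSup (fun i => ENNReal.ofReal (F i)) i
        · simp

lemma top_le_iSup_of_unbounded {ι : Type*} (F : ι → ℝ)
    (h : ∀ M : ℝ, ∃ i, M ≤ F i) :
    (⊤ : ℝ≥0∞) ≤ ⨆ i, ENNReal.ofReal (F i) := by
  rw [← ENNReal.iSup_natCast]
  refine iSup_le fun n => ?_
  obtain ⟨i, hi⟩ := h n
  calc ((n : ℝ≥0∞)) = ENNReal.ofReal n := by simp
    _ ≤ ENNReal.ofReal (F i) := ENNReal.ofReal_le_ofReal hi
    _ ≤ _ := le_iSup (fun i => ENNReal.ofReal (F i)) i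



lemma cont_integrable {X : Type*} [MetricSpace X] [CompactSpace X] [MeasurableSpace X]
    [BorelSpace X] (μ : Measure X) [IsFiniteMeasure μ] {g : X → ℝ} (hg : Continuous g) :
    Integrable g μ :=
  hg.integrable_of_hasCompactSupport (HasCompactSupport.of_compactSpace g)

/-- Nonnegativity of relative entropy. -/
lemma integral_llr_nonneg {α : Type*} [MeasurableSpace α] {p q : Measure α}
    [IsProbabilityMeasure p] [IsProbabilityMeasure q] (hpq : p ≪ q)
    (hint : Integrable (llr p q) p) : 0 ≤ ∫ x, llr p q x ∂p := by
  have h2 : (fun x => Real.exp (- llr p q x)) =ᵐ[p] fun x => (q.rnDeriv p x).toReal :=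
    exp_neg_llr hpq
  have hi : Integrable (fun x => (q.rnDeriv p x).toReal) p :=
    Measure.integrable_toReal_rnDeriv
  have hexp : Integrable (fun x => Real.exp (- llr p q x)) p := hi.congr h2.symm
  have hmono : ∫ x, - llr p q x ∂p ≤ ∫ x, Real.exp (- llr p q x) - 1 ∂p := by
    refine integral_mono hint.neg (hexp.sub (integrable_const 1)) fun x => ?_
    have := Real.add_one_le_exp (- llr p q x)
    simp only [Pi.neg_apply]
    linarith
  have heq : ∫ x, Real.exp (- llr p q x) ∂p = ∫ x, (q.rnDeriv p x).toReal ∂p :=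
    integral_congr_ae h2
  have hle : ∫ x, (q.rnDeriv p x).toReal ∂p ≤ 1 := by
    rw [Measure.integral_toReal_rnDeriv' ]
    simp only [measureReal_def, measure_univ, ENNReal.toReal_one]
    have : (0:ℝ) ≤ ((q.singularPart p) Set.univ).toReal := ENNReal.toReal_nonneg
    linarith
  have hsub : ∫ x, Real.exp (- llr p q x) - 1 ∂p
      = ∫ x, Real.exp (- llr p q x) ∂p - 1 := by
    rw [integral_sub hexp (integrable_const 1)]
    simp
  have hneg : ∫ x, - llr p q x ∂p = - ∫ x, llr p q x ∂p := integral_neg _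
  linarith [hmono, hsub ▸ hmono]

/-- Gibbs' inequality / easy direction. -/
lemma gibbs {X : Type*} [MetricSpace X] [CompactSpace X] [MeasurableSpace X] [BorelSpace X]
    (μ ν : Measure X) [IsProbabilityMeasure μ] [IsProbabilityMeasure ν]
    (hac : ν ≪ μ) (hint : Integrable (llr ν μ) ν) {g : X → ℝ} (hg : Continuous g) :
    ∫ x, g x ∂ν - Real.log (∫ x, Real.exp (g x) ∂μ) ≤ ∫ x, llr ν μ x ∂ν := by
  have hgν : Integrable g ν := cont_integrable ν hg
  have hexpμ : Integrable (fun x => Real.exp (g x)) μ := cont_integrable μ (Real.continuous_exp.comp hg)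
  have ht : IsProbabilityMeasure (μ.tilted g) := isProbabilityMeasure_tilted hexpμ
  have hνt : ν ≪ μ.tilted g := hac.trans (absolutelyContinuous_tilted hexpμ)
  have h_int_t : Integrable (llr ν (μ.tilted g)) ν :=
    integrable_llr_tilted_right hac hgν hint hexpμ
  have heq : ∫ x, llr ν (μ.tilted g) x ∂ν
      = ∫ x, llr ν μ x ∂ν - ∫ x, g x ∂ν + Real.log (∫ x, Real.exp (g x) ∂μ) :=
    integral_llr_tilted_right hac hgν hexpμ hint
  have hnon : 0 ≤ ∫ x, llr ν (μ.tilted g) x ∂ν := integral_llr_nonneg hνt h_int_t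
  linarith

/-- approximation of a bounded measurable function by a continuous one, preserving the
Donsker-Varadhan functional up to `ε`. -/
lemma approx {X : Type*} [MetricSpace X] [CompactSpace X] [MeasurableSpace X] [BorelSpace X]
    (μ ν : Measure X) [IsProbabilityMeasure μ] [IsProbabilityMeasure ν]
    {h : X → ℝ} (hm : Measurable h) {c : ℝ} (hc : 0 ≤ c) (hb : ∀ x, |h x| ≤ c)
    {ε : ℝ} (hε : 0 < ε) :
    ∃ g : C(X, ℝ),
      (∫ x, h x ∂ν - Real.log (∫ x, Real.exp (h x) ∂μ)) - ε
        ≤ ∫ x, g x ∂ν - Real.log (∫ x, Real.exp (g x) ∂μ) := by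
  set ρ : Measure X := μ + ν with hρ
  have hInt : Integrable h ρ := by
    refine Integrable.mono' (integrable_const c) hm.aestronglyMeasurable ?_
    exact ae_of_all _ fun x => by simpa using hb x
  set δ : ℝ := ε / (1 + Real.exp (2 * c)) with hδdef
  have hδpos : 0 < δ := by positivity
  obtain ⟨g₀, -, hg₀close, g₀cont, g₀int⟩ := hInt.exists_hasCompactSupport_integral_sub_le hδpos
  set g : X → ℝ := fun x => clamp c (g₀ x) with hgdef
  have gcont : Continuous g := continuous_const.max (continuous_const.min g₀cont)
  have hgb : ∀ x, |g x| ≤ c := fun x => abs_clamp_le hc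
  have key : ∀ x, |h x - g x| ≤ ‖h x - g₀ x‖ := fun x => by
    rw [Real.norm_eq_abs]
    calc |h x - g x| = |clamp c (h x) - clamp c (g₀ x)| := by rw [clamp_eq_self (hb x)]
      _ ≤ |h x - g₀ x| := clamp_lipschitz _ _ _
  have gIntρ : Integrable g ρ := cont_integrable ρ gcont
  have habsInt : Integrable (fun x => |h x - g x|) ρ := (hInt.sub gIntρ).abs
  have hd : ∫ x, |h x - g x| ∂ρ ≤ δ :=
    (integral_mono habsInt (hInt.sub g₀int).norm key).trans hg₀close
  -- splitting over the sum measure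
  have habsμ : Integrable (fun x => |h x - g x|) μ := habsInt.left_of_add_measure
  have habsν : Integrable (fun x => |h x - g x|) ν := habsInt.right_of_add_measure
  have hsplit : ∫ x, |h x - g x| ∂ρ = ∫ x, |h x - g x| ∂μ + ∫ x, |h x - g x| ∂ν :=
    integral_add_measure habsμ habsν
  have hnn1 : 0 ≤ ∫ x, |h x - g x| ∂μ := integral_nonneg fun x => abs_nonneg _
  have hnn2 : 0 ≤ ∫ x, |h x - g x| ∂ν := integral_nonneg fun x => abs_nonneg _
  have hdμ : ∫ x, |h x - g x| ∂μ ≤ δ := by linarith [hsplit ▸ hd]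
  have hdν : ∫ x, |h x - g x| ∂ν ≤ δ := by linarith [hsplit ▸ hd]
  -- integrals against ν
  have hIntν : Integrable h ν := hInt.right_of_add_measure
  have gIntν : Integrable g ν := gIntρ.right_of_add_measure
  have h1 : ∫ x, h x ∂ν - ∫ x, g x ∂ν ≤ δ := by
    rw [← integral_sub hIntν gIntν]
    exact (integral_mono (hIntν.sub gIntν) habsν fun x => le_abs_self _).trans hdν
  -- exponential integrals against μ
  have hexph : Integrable (fun x => Real.exp (h x)) μ := by
    refine Integrable.mono' (integrable_const (Real.exp c))
      (Real.measurable_exp.comp hm).aestronglyMeasurable ?_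
    refine ae_of_all _ fun x => ?_
    rw [Real.norm_eq_abs, abs_of_pos (Real.exp_pos _)]
    exact Real.exp_le_exp.2 ((abs_le.1 (hb x)).2)
  have hexpg : Integrable (fun x => Real.exp (g x)) μ :=
    cont_integrable μ (Real.continuous_exp.comp gcont)
  have hZh_pos : 0 < ∫ x, Real.exp (h x) ∂μ := integral_exp_pos hexph
  have hZg_pos : 0 < ∫ x, Real.exp (g x) ∂μ := integral_exp_pos hexpg
  have hZh_ge : Real.exp (-c) ≤ ∫ x, Real.exp (h x) ∂μ := by
    have := integral_mono (integrable_const (Real.exp (-c))) hexph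
      (fun x => Real.exp_le_exp.2 (neg_le_of_abs_le (hb x)))
    simpa using this
  have h2 : ∫ x, Real.exp (g x) ∂μ ≤ ∫ x, Real.exp (h x) ∂μ + Real.exp c * δ := by
    have hp : ∀ x, Real.exp (g x) ≤ Real.exp (h x) + Real.exp c * |h x - g x| := by
      intro x
      have := exp_sub_exp_le (a := g x) (b := h x) (c := c) (abs_le.1 (hgb x)).2
        (abs_le.1 (hb x)).2
      rw [abs_sub_comm] at this
      linarith
    calc ∫ x, Real.exp (g x) ∂μ
        ≤ ∫ x, Real.exp (h x) + Real.exp c * |h x - g x| ∂μ :=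
          integral_mono hexpg (hexph.add (habsμ.const_mul _)) hp
      _ = ∫ x, Real.exp (h x) ∂μ + Real.exp c * ∫ x, |h x - g x| ∂μ := by
          rw [integral_add hexph (habsμ.const_mul _), integral_const_mul]
      _ ≤ ∫ x, Real.exp (h x) ∂μ + Real.exp c * δ := by
          have := mul_le_mul_of_nonneg_left hdμ (Real.exp_pos c).le
          linarith
  have h3 : Real.log (∫ x, Real.exp (g x) ∂μ)
      ≤ Real.log (∫ x, Real.exp (h x) ∂μ) + Real.exp (2 * c) * δ := by
    have l1 : Real.log (∫ x, Real.exp (g x) ∂μ)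
        ≤ Real.log (∫ x, Real.exp (h x) ∂μ + Real.exp c * δ) := Real.log_le_log hZg_pos h2
    have l2 := log_add_le hZh_pos (by positivity : (0:ℝ) ≤ Real.exp c * δ)
    have l3 : Real.exp c * δ / (∫ x, Real.exp (h x) ∂μ) ≤ Real.exp (2 * c) * δ := by
      have he : Real.exp (2 * c) = Real.exp c * Real.exp c := by
        rw [two_mul, Real.exp_add]
      have e1 : Real.exp c * δ / Real.exp (-c) = Real.exp (2 * c) * δ := by
        rw [Real.exp_neg, div_inv_eq_mul, he]; ring
      calc Real.exp c * δ / (∫ x, Real.exp (h x) ∂μ)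
          ≤ Real.exp c * δ / Real.exp (-c) := by
            gcongr
        _ = Real.exp (2 * c) * δ := e1
    linarith
  refine ⟨⟨g, gcont⟩, ?_⟩
  simp only [ContinuousMap.coe_mk]
  have hδε : (1 + Real.exp (2 * c)) * δ = ε := by
    rw [hδdef]; field_simp
  nlinarith [h1, h3]



lemma abs_clamp_le_abs {c a : ℝ} (hc : 0 ≤ c) : |clamp c a| ≤ |a| := by
  unfold clamp
  rw [abs_le]
  constructor
  · rcases le_total 0 a with h | h
    · have h1 : 0 ≤ min c a := le_min hc h
      have h2 := le_max_right (-c) (min c a)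
      linarith [abs_nonneg a]
    · have h1 : min c a = a := min_eq_right (h.trans hc)
      rw [abs_of_nonpos h]
      rw [h1]
      linarith [le_max_right (-c) a]
  · exact max_le (by linarith [abs_nonneg a]) ((min_le_right c a).trans (le_abs_self a))


lemma tendsto_clamp (a : ℝ) :
    Filter.Tendsto (fun n : ℕ => clamp n a) Filter.atTop (nhds a) := by
  refine Filter.Tendsto.congr' ?_ tendsto_const_nhds
  obtain ⟨N, hN⟩ := exists_nat_ge |a|
  filter_upwards [Filter.eventually_ge_atTop N] with n hn
  exact (clamp_eq_self (hN.trans (by exact_mod_cast hn))).symm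

variable {X : Type*} [MeasurableSpace X] (μ ν : Measure X)
  [IsProbabilityMeasure μ] [IsProbabilityMeasure ν]

/-- truncated log-likelihood ratio, set to `-n` where the density vanishes -/
noncomputable def trunc (n : ℕ) : X → ℝ :=
  fun x => if ν.rnDeriv μ x = 0 then -(n : ℝ) else clamp n (llr ν μ x)

lemma trunc_measurable (n : ℕ) : Measurable (trunc μ ν n) := by
  unfold trunc
  exact Measurable.ite ((Measure.measurable_rnDeriv ν μ) (measurableSet_singleton 0))
    measurable_const
    (measurable_const.max (measurable_const.min (measurable_llr ν μ)))

lemma abs_trunc_le (n : ℕ) (x : X) : |trunc μ ν n x| ≤ (n : ℝ) := by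
  unfold trunc clamp
  split_ifs
  · rw [abs_neg, Nat.abs_cast]
  · rw [abs_le]
    exact ⟨le_max_left _ _, max_le (neg_le_self (Nat.cast_nonneg n)) (min_le_left _ _)⟩

lemma trunc_ae_eq (hac : ν ≪ μ) (n : ℕ) :
    trunc μ ν n =ᵐ[ν] fun x => clamp n (llr ν μ x) := by
  filter_upwards [Measure.rnDeriv_pos hac] with x hx
  exact if_neg hx.ne'

lemma trunc_exp_integrable (n : ℕ) : Integrable (fun x => Real.exp (trunc μ ν n x)) μ := by
  refine Integrable.mono' (integrable_const (Real.exp n))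
    (Real.measurable_exp.comp (trunc_measurable μ ν n)).aestronglyMeasurable ?_
  refine ae_of_all _ fun x => ?_
  rw [Real.norm_eq_abs, abs_of_pos (Real.exp_pos _)]
  exact Real.exp_le_exp.2 (abs_le.1 (abs_trunc_le μ ν n x)).2

lemma trunc_exp_integral_le (hac : ν ≪ μ) (n : ℕ) :
    ∫ x, Real.exp (trunc μ ν n x) ∂μ ≤ 1 + Real.exp (-(n : ℝ)) := by
  have key : ∀ᵐ x ∂μ, Real.exp (trunc μ ν n x)
      ≤ (ν.rnDeriv μ x).toReal + Real.exp (-(n : ℝ)) := by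
    filter_upwards [Measure.rnDeriv_lt_top ν μ] with x hx
    by_cases h0 : ν.rnDeriv μ x = 0
    · simp [trunc, h0]
    · have ht : 0 < (ν.rnDeriv μ x).toReal := ENNReal.toReal_pos h0 hx.ne
      have hn0 : (0:ℝ) ≤ n := Nat.cast_nonneg n
      rw [trunc, if_neg h0]
      unfold clamp llr
      rcases le_total (Real.log (ν.rnDeriv μ x).toReal) (-(n:ℝ)) with hcase | hcase
      · have h1 : min (n:ℝ) (Real.log (ν.rnDeriv μ x).toReal)
            = Real.log (ν.rnDeriv μ x).toReal := min_eq_right (by linarith)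
        rw [h1, max_eq_left hcase]
        linarith [ht]
      · have h1 : min (n:ℝ) (Real.log (ν.rnDeriv μ x).toReal) ≥ -(n:ℝ) :=
          le_min (by linarith) hcase
        rw [max_eq_right h1]
        have h2 : Real.exp (min (n:ℝ) (Real.log (ν.rnDeriv μ x).toReal))
            ≤ Real.exp (Real.log (ν.rnDeriv μ x).toReal) :=
          Real.exp_le_exp.2 (min_le_right _ _)
        rw [Real.exp_log ht] at h2
        linarith [Real.exp_pos (-(n:ℝ))]
  have hint2 : Integrable (fun x => (ν.rnDeriv μ x).toReal + Real.exp (-(n:ℝ))) μ :=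
    Measure.integrable_toReal_rnDeriv.add (integrable_const _)
  have := integral_mono_ae (trunc_exp_integrable μ ν n) hint2 key
  rw [integral_add Measure.integrable_toReal_rnDeriv (integrable_const _),
    Measure.integral_toReal_rnDeriv hac] at this
  simpa using this

lemma trunc_log_integral_le (hac : ν ≪ μ) (n : ℕ) :
    Real.log (∫ x, Real.exp (trunc μ ν n x) ∂μ) ≤ Real.log (1 + Real.exp (-(n : ℝ))) :=
  Real.log_le_log (integral_exp_pos (trunc_exp_integrable μ ν n))
    (trunc_exp_integral_le μ ν hac n)

/-- the negative part of `llr` has `ν`-lintegral at most 1. -/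
lemma lintegral_neg_llr_le (hac : ν ≪ μ) :
    ∫⁻ x, ENNReal.ofReal (- llr ν μ x) ∂ν ≤ 1 := by
  have hmeas : AEMeasurable (fun x => ENNReal.ofReal (- llr ν μ x)) μ :=
    ((measurable_llr ν μ).neg.ennreal_ofReal).aemeasurable
  rw [← lintegral_rnDeriv_mul hac hmeas]
  have key : ∀ᵐ x ∂μ, ν.rnDeriv μ x * ENNReal.ofReal (- llr ν μ x) ≤ 1 := by
    filter_upwards [Measure.rnDeriv_lt_top ν μ] with x hx
    by_cases h0 : ν.rnDeriv μ x = 0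
    · simp [h0]
    · have ht : 0 < (ν.rnDeriv μ x).toReal := ENNReal.toReal_pos h0 hx.ne
      have hrt : ν.rnDeriv μ x = ENNReal.ofReal (ν.rnDeriv μ x).toReal :=
        (ENNReal.ofReal_toReal hx.ne).symm
      rw [hrt, ← ENNReal.ofReal_mul ENNReal.toReal_nonneg]
      rw [← ENNReal.ofReal_one]
      apply ENNReal.ofReal_le_ofReal
      set t := (ν.rnDeriv μ x).toReal with htdef
      rcases le_total 1 t with hcase | hcase
      · have : 0 ≤ Real.log t := Real.log_nonneg hcase
        unfold llr
        nlinarith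
      · have h1 : - Real.log t = Real.log t⁻¹ := (Real.log_inv t).symm
        have h2 : Real.log t⁻¹ ≤ t⁻¹ - 1 := Real.log_le_sub_one_of_pos (by positivity)
        have h3 : t * t⁻¹ = 1 := mul_inv_cancel₀ ht.ne'
        unfold llr
        rw [← htdef, h1]
        nlinarith
  calc ∫⁻ x, ν.rnDeriv μ x * ENNReal.ofReal (- llr ν μ x) ∂μ ≤ ∫⁻ _, 1 ∂μ :=
        lintegral_mono_ae key
    _ = 1 := by simp

lemma negpart_integrable (hac : ν ≪ μ) :
    Integrable (fun x => min (llr ν μ x) 0) ν := by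
  refine ⟨((measurable_llr ν μ).min measurable_const).aestronglyMeasurable, ?_⟩
  rw [hasFiniteIntegral_iff_norm]
  have hb : ∀ x, ENNReal.ofReal ‖min (llr ν μ x) 0‖ ≤ ENNReal.ofReal (- llr ν μ x) := by
    intro x
    rcases le_total (llr ν μ x) 0 with h | h
    · apply ENNReal.ofReal_le_ofReal
      rw [min_eq_left h, Real.norm_eq_abs, abs_of_nonpos h]
    · rw [min_eq_right h]
      simp
  calc ∫⁻ x, ENNReal.ofReal ‖min (llr ν μ x) 0‖ ∂ν
      ≤ ∫⁻ x, ENNReal.ofReal (- llr ν μ x) ∂ν := lintegral_mono hb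
    _ ≤ 1 := lintegral_neg_llr_le μ ν hac
    _ < ⊤ := ENNReal.one_lt_top

lemma negpart_integral_ge (hac : ν ≪ μ) :
    -1 ≤ ∫ x, min (llr ν μ x) 0 ∂ν := by
  have h1 : ∫ x, min (llr ν μ x) 0 ∂ν = - ∫ x, - min (llr ν μ x) 0 ∂ν := by
    rw [integral_neg]; ring
  have h2 : ∫ x, - min (llr ν μ x) 0 ∂ν
      = (∫⁻ x, ENNReal.ofReal (- min (llr ν μ x) 0) ∂ν).toReal := by
    rw [integral_eq_lintegral_of_nonneg_ae
      (ae_of_all _ fun x => neg_nonneg.2 (min_le_right _ _))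
      ((measurable_llr ν μ).min measurable_const).neg.aestronglyMeasurable]
  have h3 : ∫⁻ x, ENNReal.ofReal (- min (llr ν μ x) 0) ∂ν ≤ 1 := by
    refine le_trans (lintegral_mono fun x => ?_) (lintegral_neg_llr_le μ ν hac)
    rcases le_total (llr ν μ x) 0 with h | h
    · rw [min_eq_left h]
    · rw [min_eq_right h]
      simp
  have h4 : (∫⁻ x, ENNReal.ofReal (- min (llr ν μ x) 0) ∂ν).toReal ≤ 1 := by
    have := ENNReal.toReal_mono (by norm_num) h3
    simpa using this
  rw [h1, h2]
  linarith [h4]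


end DVaux



open MeasureTheory ENNReal

open Classical in
/-- The relative entropy `H_μ(ν)` of `ν` with respect to `μ`: it equals
`∫ log(dν/dμ) dν` if `ν ≪ μ` and `log(dν/dμ)` is `ν`-integrable, and `+∞` otherwise. -/
noncomputable def relEntropy {X : Type*} [MeasurableSpace X] (μ ν : Measure X) : ℝ≥0∞ :=
  if ν ≪ μ ∧ Integrable (fun x => Real.log (ν.rnDeriv μ x).toReal) ν then
    ENNReal.ofReal (∫ x, Real.log (ν.rnDeriv μ x).toReal ∂ν)
  else ⊤

/-- Donsker–Varadhan variational formula: for Borel probability measures `μ, ν` on a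
compact metric space `X`,
`H_μ(ν) = sup_{g ∈ C(X,ℝ)} ( ∫ g dν − log ∫ e^g dμ )`, the equality holding in `[0,+∞]`. -/
theorem relEntropy_eq_iSup_continuous {X : Type*} [MetricSpace X] [CompactSpace X]
    [MeasurableSpace X] [BorelSpace X]
    (μ ν : Measure X) [IsProbabilityMeasure μ] [IsProbabilityMeasure ν] :
    relEntropy μ ν =
      ⨆ g : C(X, ℝ),
        ENNReal.ofReal (∫ x, g x ∂ν - Real.log (∫ x, Real.exp (g x) ∂μ)) := by
  apply le_antisymm
  · -- hard direction : relEntropy ≤ sup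
    by_cases hcond : ν ≪ μ ∧ Integrable (fun x => Real.log (ν.rnDeriv μ x).toReal) ν
    · obtain ⟨hac, hint⟩ := hcond
      have hint' : Integrable (llr ν μ) ν := hint
      simp only [relEntropy]
      rw [if_pos ⟨hac, hint⟩]
      have hIeq : ∫ x, Real.log (ν.rnDeriv μ x).toReal ∂ν = ∫ x, llr ν μ x ∂ν := rfl
      rw [hIeq]
      refine DVaux.ofReal_le_iSup_of_forall_eps _ _ fun ε hε => ?_
      have hdom : Filter.Tendsto (fun n : ℕ => ∫ x, DVaux.clamp n (llr ν μ x) ∂ν)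
          Filter.atTop (nhds (∫ x, llr ν μ x ∂ν)) := by
        refine tendsto_integral_of_dominated_convergence (fun x => |llr ν μ x|)
          (fun n => (measurable_const.max
            (measurable_const.min (measurable_llr ν μ))).aestronglyMeasurable)
          hint'.abs (fun n => ae_of_all _ fun x => ?_)
          (ae_of_all _ fun x => DVaux.tendsto_clamp _)
        rw [Real.norm_eq_abs]
        exact DVaux.abs_clamp_le_abs (Nat.cast_nonneg n)
      have hexp0 : Filter.Tendsto (fun n : ℕ => Real.exp (-(n:ℝ))) Filter.atTop (nhds 0) := by
        have h1 : Filter.Tendsto (fun n : ℕ => -(n:ℝ)) Filter.atTop Filter.atBot := by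
          apply Filter.tendsto_neg_atTop_atBot.comp
          exact tendsto_natCast_atTop_atTop
        have h2 := Real.tendsto_exp_atBot.comp h1
        simpa [Function.comp_def] using h2
      have hlog0 : Filter.Tendsto (fun n : ℕ => Real.log (1 + Real.exp (-(n:ℝ))))
          Filter.atTop (nhds 0) := by
        have h2 : Filter.Tendsto (fun n : ℕ => 1 + Real.exp (-(n:ℝ)))
            Filter.atTop (nhds 1) := by
          simpa using tendsto_const_nhds.add hexp0
        have h3 := (Real.continuousAt_log (by norm_num : (1:ℝ) ≠ 0)).tendsto.comp h2
        simpa [Function.comp_def] using h3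
      have e1 : ∀ᶠ n : ℕ in Filter.atTop,
          ∫ x, llr ν μ x ∂ν - ε/4 ≤ ∫ x, DVaux.clamp n (llr ν μ x) ∂ν :=
        hdom.eventually (eventually_ge_nhds (by linarith))
      have e2 : ∀ᶠ n : ℕ in Filter.atTop, Real.log (1 + Real.exp (-(n:ℝ))) ≤ ε/4 :=
        hlog0.eventually (eventually_le_nhds (by linarith))
      obtain ⟨n, hn1, hn2⟩ := (e1.and e2).exists
      obtain ⟨g, hg⟩ := DVaux.approx μ ν (DVaux.trunc_measurable μ ν n) (Nat.cast_nonneg n)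
        (DVaux.abs_trunc_le μ ν n) (by linarith : (0:ℝ) < ε/2)
      refine ⟨g, ?_⟩
      have htr : ∫ x, DVaux.trunc μ ν n x ∂ν = ∫ x, DVaux.clamp n (llr ν μ x) ∂ν :=
        integral_congr_ae (DVaux.trunc_ae_eq μ ν hac n)
      have hlogle := DVaux.trunc_log_integral_le μ ν hac n
      linarith [hg, htr ▸ hg]
    · simp only [relEntropy]
      rw [if_neg hcond]
      refine DVaux.top_le_iSup_of_unbounded _ fun M => ?_
      by_cases hac : ν ≪ μ
      · -- absolutely continuous but not integrable
        have hnint : ¬ Integrable (llr ν μ) ν := fun hI => hcond ⟨hac, hI⟩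
        have hP : ∫⁻ x, ENNReal.ofReal (llr ν μ x) ∂ν = ⊤ := by
          by_contra hPne
          apply hnint
          refine ⟨(measurable_llr ν μ).aestronglyMeasurable, ?_⟩
          rw [hasFiniteIntegral_iff_norm]
          have hptw : ∀ x, ENNReal.ofReal ‖llr ν μ x‖
              ≤ ENNReal.ofReal (llr ν μ x) + ENNReal.ofReal (- llr ν μ x) := by
            intro x
            rcases le_total 0 (llr ν μ x) with hx | hx
            · rw [Real.norm_eq_abs, abs_of_nonneg hx]; exact le_add_right le_rfl
            · rw [Real.norm_eq_abs, abs_of_nonpos hx]; exact le_add_left le_rfl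
          calc ∫⁻ x, ENNReal.ofReal ‖llr ν μ x‖ ∂ν
              ≤ ∫⁻ x, ENNReal.ofReal (llr ν μ x) + ENNReal.ofReal (- llr ν μ x) ∂ν :=
                lintegral_mono hptw
            _ = (∫⁻ x, ENNReal.ofReal (llr ν μ x) ∂ν)
                + ∫⁻ x, ENNReal.ofReal (- llr ν μ x) ∂ν :=
                lintegral_add_left (measurable_llr ν μ).ennreal_ofReal _
            _ ≤ (∫⁻ x, ENNReal.ofReal (llr ν μ x) ∂ν) + 1 := by
                gcongr
                exact DVaux.lintegral_neg_llr_le μ ν hac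
            _ < ⊤ := ENNReal.add_lt_top.mpr ⟨lt_top_iff_ne_top.2 hPne, ENNReal.one_lt_top⟩
        have hmeasS : ∀ n : ℕ,
            Measurable fun x => ENNReal.ofReal (min (n:ℝ) (max (llr ν μ x) 0)) := fun n =>
          (measurable_const.min ((measurable_llr ν μ).max measurable_const)).ennreal_ofReal
        have hmono : Monotone fun (n:ℕ) (x:X) =>
            ENNReal.ofReal (min (n:ℝ) (max (llr ν μ x) 0)) := by
          intro i j hij
          intro x
          exact ENNReal.ofReal_le_ofReal (min_le_min (by exact_mod_cast hij) le_rfl)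
        have hpt : ∀ x, (⨆ n : ℕ, ENNReal.ofReal (min (n:ℝ) (max (llr ν μ x) 0)))
            = ENNReal.ofReal (llr ν μ x) := by
          intro x
          have hmax : ENNReal.ofReal (max (llr ν μ x) 0) = ENNReal.ofReal (llr ν μ x) := by
            rcases le_total (llr ν μ x) 0 with hx | hx
            · simp [max_eq_right hx, ENNReal.ofReal_of_nonpos hx]
            · rw [max_eq_left hx]
          refine le_antisymm (iSup_le fun n => ?_) ?_
          · rw [← hmax]
            exact ENNReal.ofReal_le_ofReal (min_le_right _ _)
          · obtain ⟨N, hN⟩ := exists_nat_ge (max (llr ν μ x) 0)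
            refine le_trans ?_ (le_iSup _ N)
            rw [min_eq_right hN, hmax]
        have hSup : (⨆ n : ℕ, ∫⁻ x, ENNReal.ofReal (min (n:ℝ) (max (llr ν μ x) 0)) ∂ν)
            = ⊤ := by
          rw [← lintegral_iSup hmeasS hmono]
          calc ∫⁻ x, ⨆ n : ℕ, ENNReal.ofReal (min (n:ℝ) (max (llr ν μ x) 0)) ∂ν
              = ∫⁻ x, ENNReal.ofReal (llr ν μ x) ∂ν := lintegral_congr hpt
            _ = ⊤ := hP
        have hlog2pos : (0:ℝ) ≤ Real.log 2 := Real.log_nonneg one_le_two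
        set M' : ℝ := max M 0 + 2 + Real.log 2 with hM'
        have hM'0 : 0 ≤ M' := by
          have := le_max_right M 0
          rw [hM']; linarith
        have hM'big : ENNReal.ofReal M'
            < ⨆ n : ℕ, ∫⁻ x, ENNReal.ofReal (min (n:ℝ) (max (llr ν μ x) 0)) ∂ν := by
          rw [hSup]; exact ENNReal.ofReal_lt_top
        obtain ⟨n, hn⟩ := lt_iSup_iff.mp hM'big
        have hSn_ne : (∫⁻ x, ENNReal.ofReal (min (n:ℝ) (max (llr ν μ x) 0)) ∂ν) ≠ ⊤ := by
          have hb : ∫⁻ x, ENNReal.ofReal (min (n:ℝ) (max (llr ν μ x) 0)) ∂ν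
              ≤ ∫⁻ _, ENNReal.ofReal (n:ℝ) ∂ν :=
            lintegral_mono fun x => ENNReal.ofReal_le_ofReal (min_le_left _ _)
          rw [lintegral_const, measure_univ, mul_one] at hb
          exact ne_top_of_le_ne_top ENNReal.ofReal_ne_top hb
        have hIeq2 : ∫ x, min (n:ℝ) (max (llr ν μ x) 0) ∂ν
            = (∫⁻ x, ENNReal.ofReal (min (n:ℝ) (max (llr ν μ x) 0)) ∂ν).toReal :=
          integral_eq_lintegral_of_nonneg_ae
            (ae_of_all _ fun x => le_min (Nat.cast_nonneg n) (le_max_right _ _))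
            (measurable_const.min
              ((measurable_llr ν μ).max measurable_const)).aestronglyMeasurable
        have hMn : M' ≤ ∫ x, min (n:ℝ) (max (llr ν μ x) 0) ∂ν := by
          rw [hIeq2]
          have h2 := ENNReal.toReal_mono hSn_ne hn.le
          rwa [ENNReal.toReal_ofReal hM'0] at h2
        have hpt2 : ∀ x, min (n:ℝ) (max (llr ν μ x) 0) + min (llr ν μ x) 0
            ≤ DVaux.clamp n (llr ν μ x) := by
          intro x
          have hn0 : (0:ℝ) ≤ n := Nat.cast_nonneg n
          unfold DVaux.clamp
          rcases le_total (llr ν μ x) 0 with hx | hx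
          · rw [max_eq_right hx, min_eq_right hn0, min_eq_left hx,
              min_eq_right (hx.trans hn0)]
            have := le_max_right (-(n:ℝ)) (llr ν μ x)
            linarith
          · rw [max_eq_left hx, min_eq_right hx]
            have := le_max_right (-(n:ℝ)) (min (n:ℝ) (llr ν μ x))
            linarith
        have hmin_int : Integrable (fun x => min (n:ℝ) (max (llr ν μ x) 0)) ν := by
          refine Integrable.mono' (integrable_const (n:ℝ))
            (measurable_const.min
              ((measurable_llr ν μ).max measurable_const)).aestronglyMeasurable
            (ae_of_all _ fun x => ?_)
          rw [Real.norm_eq_abs,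
            abs_of_nonneg (le_min (Nat.cast_nonneg n) (le_max_right _ _))]
          exact min_le_left _ _
        have hneg_int := DVaux.negpart_integrable μ ν hac
        have hclamp_int : Integrable (fun x => DVaux.clamp n (llr ν μ x)) ν := by
          refine Integrable.mono' (integrable_const (n:ℝ))
            (measurable_const.max
              (measurable_const.min (measurable_llr ν μ))).aestronglyMeasurable
            (ae_of_all _ fun x => ?_)
          rw [Real.norm_eq_abs]
          exact DVaux.abs_clamp_le (Nat.cast_nonneg n)
        have hsum : (∫ x, min (n:ℝ) (max (llr ν μ x) 0) ∂ν) + ∫ x, min (llr ν μ x) 0 ∂ν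
            ≤ ∫ x, DVaux.clamp n (llr ν μ x) ∂ν := by
          rw [← integral_add hmin_int hneg_int]
          exact integral_mono (hmin_int.add hneg_int) hclamp_int hpt2
        have hIn : M' - 1 ≤ ∫ x, DVaux.clamp n (llr ν μ x) ∂ν := by
          linarith [DVaux.negpart_integral_ge μ ν hac, hMn, hsum]
        obtain ⟨g, hg⟩ := DVaux.approx μ ν (DVaux.trunc_measurable μ ν n) (Nat.cast_nonneg n)
          (DVaux.abs_trunc_le μ ν n) one_pos
        refine ⟨g, ?_⟩
        have htr : ∫ x, DVaux.trunc μ ν n x ∂ν = ∫ x, DVaux.clamp n (llr ν μ x) ∂ν :=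
          integral_congr_ae (DVaux.trunc_ae_eq μ ν hac n)
        have hlogle := DVaux.trunc_log_integral_le μ ν hac n
        have hexple : Real.exp (-(n:ℝ)) ≤ 1 := by
          have h := Real.exp_le_exp.2 (neg_nonpos.2 (Nat.cast_nonneg n))
          rwa [Real.exp_zero] at h
        have hlog2 : Real.log (1 + Real.exp (-(n:ℝ))) ≤ Real.log 2 := by
          apply Real.log_le_log (by positivity)
          linarith
        have hMle : M ≤ M' - 2 - Real.log 2 := by
          have := le_max_left M 0
          rw [hM']; linarith
        linarith [hg, htr ▸ hg, hlogle, hlog2, hMle, hIn]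
      · -- not absolutely continuous
        have hexists : ∃ s : Set X, μ s = 0 ∧ ν s ≠ 0 := by
          by_contra hctr
          push_neg at hctr
          exact hac fun s hs => hctr s hs
        obtain ⟨s, hs0, hsne⟩ := hexists
        set A := toMeasurable μ s with hA
        have hμA : μ A = 0 := by rw [hA, measure_toMeasurable]; exact hs0
        have hνA : ν A ≠ 0 := fun h => hsne (measure_mono_null (subset_toMeasurable μ s) h)
        have hνA_pos : 0 < (ν A).toReal := ENNReal.toReal_pos hνA (measure_ne_top ν A)
        set c : ℝ := max ((M + 1) / (ν A).toReal) 0 with hc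
        have hc0 : 0 ≤ c := le_max_right _ _
        set h : X → ℝ := A.indicator (fun _ => c) with hh
        have hmeas : Measurable h :=
          measurable_const.indicator (measurableSet_toMeasurable μ s)
        have hbd : ∀ x, |h x| ≤ c := by
          intro x
          by_cases hx : x ∈ A
          · rw [hh]; simp [Set.indicator_of_mem hx, abs_of_nonneg hc0]
          · rw [hh]; simp [Set.indicator_of_notMem hx, hc0]
        obtain ⟨g, hg⟩ := DVaux.approx μ ν hmeas hc0 hbd one_pos
        refine ⟨g, ?_⟩
        have hIν : ∫ x, h x ∂ν = (ν A).toReal * c := by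
          rw [hh, integral_indicator_const _ (measurableSet_toMeasurable μ s)]
          simp [smul_eq_mul]
          exact Or.inl rfl
        have hIμ : ∫ x, Real.exp (h x) ∂μ = 1 := by
          have hae : ∀ᵐ x ∂μ, x ∉ A := by
            rw [ae_iff]
            simpa [not_not] using hμA
          have heq : (fun x => Real.exp (h x)) =ᵐ[μ] fun _ => 1 := by
            filter_upwards [hae] with x hx
            rw [hh, Set.indicator_of_notMem hx, Real.exp_zero]
          rw [integral_congr_ae heq]
          simp
        have hM : M + 1 ≤ (ν A).toReal * c := by
          have h1 : (M + 1) / (ν A).toReal ≤ c := le_max_left _ _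
          rw [div_le_iff₀ hνA_pos] at h1
          linarith [h1]
        rw [hIν, hIμ, Real.log_one] at hg
        linarith [hg, hM]
  · -- easy direction : sup ≤ relEntropy
    simp only [relEntropy]
    split_ifs with hcond
    · refine iSup_le fun g => ENNReal.ofReal_le_ofReal ?_
      exact DVaux.gibbs μ ν hcond.1 hcond.2 g.continuous
    · exact le_top
end

section
/- Let X be a compact metric space, μ a Borel probability measure on X, and g : X → ℝ a lower semicontinuous function (hence bounded below on X). Then sup_ν ( ∫_X g dν − H_μ(ν) ) = log ∫_X e^g dμ, where the supremum ranges over all Borel probability measures ν on X with H_μ(ν) < +∞ (for such ν the integral ∫ g dν ∈ (−∞, +∞] is well defined since g is bounded below), and both sides of the equality take values in (−∞, +∞]. -/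
open MeasureTheory ENNReal

/-- The integral `∫ g dν` as an extended real number in `(−∞,+∞]`, defined as the
difference of the integrals of the positive and negative parts of `g` (meaningful
whenever the negative part of `g` is `ν`-integrable, e.g. when `g` is bounded below). -/
noncomputable def eIntegral {X : Type*} [MeasurableSpace X] (g : X → ℝ) (ν : Measure X) :
    EReal :=
  ((∫⁻ x, ENNReal.ofReal (g x) ∂ν : ℝ≥0∞) : EReal) -
    ((∫⁻ x, ENNReal.ofReal (-g x) ∂ν : ℝ≥0∞) : EReal)

section Aux

open Real

lemma aux_coeE (x : ℝ≥0∞) (hx : x ≠ ⊤) : (x : EReal) = ((x.toReal : ℝ) : EReal) := by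
  conv_lhs => rw [← ENNReal.ofReal_toReal hx]
  rw [EReal.coe_ennreal_ofReal, max_eq_left ENNReal.toReal_nonneg]

lemma aux_llr_nonneg {X : Type*} [MeasurableSpace X] (ν ρ : Measure X)
    [IsProbabilityMeasure ν] [IsProbabilityMeasure ρ]
    (hac : ν ≪ ρ) (hint : Integrable (llr ν ρ) ν) :
    0 ≤ ∫ x, llr ν ρ x ∂ν := by
  set f : X → ℝ := fun x => ((ν.rnDeriv ρ x)⁻¹).toReal with hf
  have hmeas : Measurable f := (Measure.measurable_rnDeriv ν ρ).inv.ennreal_toReal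
  have hlint : ∫⁻ x, ENNReal.ofReal (f x) ∂ν ≤ 1 := by
    have h1 : ∀ x, ENNReal.ofReal (f x) ≤ (ν.rnDeriv ρ x)⁻¹ := fun x =>
      ENNReal.ofReal_toReal_le
    refine le_trans (lintegral_mono h1) ?_
    have h2 := lintegral_withDensity_eq_lintegral_mul ρ (Measure.measurable_rnDeriv ν ρ)
      (Measure.measurable_rnDeriv ν ρ).inv
    rw [Measure.withDensity_rnDeriv_eq ν ρ hac] at h2
    refine h2.trans_le ?_
    calc ∫⁻ x, (ν.rnDeriv ρ * fun x => (ν.rnDeriv ρ x)⁻¹) x ∂ρ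
        ≤ ∫⁻ _, 1 ∂ρ := by
          refine lintegral_mono fun x => ?_
          simp only [Pi.mul_apply]
          exact ENNReal.mul_inv_le_one _
      _ = 1 := by simp
  have hfint : Integrable f ν := by
    refine ⟨hmeas.aestronglyMeasurable, ?_⟩
    rw [hasFiniteIntegral_iff_ofReal (ae_of_all _ fun x => ENNReal.toReal_nonneg)]
    exact lt_of_le_of_lt hlint ENNReal.one_lt_top
  have hint_f_le : ∫ x, f x ∂ν ≤ 1 := by
    rw [integral_eq_lintegral_of_nonneg_ae (ae_of_all _ fun x => ENNReal.toReal_nonneg)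
      hmeas.aestronglyMeasurable]
    calc (∫⁻ x, ENNReal.ofReal (f x) ∂ν).toReal ≤ (1 : ℝ≥0∞).toReal :=
          ENNReal.toReal_mono (by simp) hlint
      _ = 1 := by simp
  have hptwise : ∀ᵐ x ∂ν, 1 - f x ≤ llr ν ρ x := by
    filter_upwards [Measure.rnDeriv_pos hac, hac.ae_le (Measure.rnDeriv_lt_top ν ρ)]
      with x hpos hlt
    have hr : 0 < (ν.rnDeriv ρ x).toReal := ENNReal.toReal_pos hpos.ne' hlt.ne
    have := Real.log_le_sub_one_of_pos (inv_pos.mpr hr)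
    rw [Real.log_inv] at this
    have hfx : f x = ((ν.rnDeriv ρ x).toReal)⁻¹ := ENNReal.toReal_inv _
    rw [llr, hfx]
    linarith
  calc (0 : ℝ) ≤ 1 - ∫ x, f x ∂ν := by linarith
    _ = ∫ x, (1 - f x) ∂ν := by
        rw [integral_sub (integrable_const 1) hfint]
        simp
    _ ≤ ∫ x, llr ν ρ x ∂ν := integral_mono_ae ((integrable_const 1).sub hfint) hint hptwise

/-- Gibbs' inequality. -/
lemma aux_gibbs {X : Type*} [MeasurableSpace X] (ν μ : Measure X)
    [IsProbabilityMeasure ν] [IsProbabilityMeasure μ]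
    (hac : ν ≪ μ) (hint : Integrable (llr ν μ) ν) (h : X → ℝ)
    (hh : Integrable h ν) (hexp : Integrable (fun x => rexp (h x)) μ) :
    ∫ x, h x ∂ν ≤ ∫ x, llr ν μ x ∂ν + Real.log (∫ x, rexp (h x) ∂μ) := by
  have hzero : NeZero μ := ⟨IsProbabilityMeasure.ne_zero μ⟩
  have hP : IsProbabilityMeasure (μ.tilted h) := isProbabilityMeasure_tilted hexp
  have hac2 : ν ≪ μ.tilted h := hac.trans (absolutelyContinuous_tilted hexp)
  have hint2 : Integrable (llr ν (μ.tilted h)) ν :=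
    integrable_llr_tilted_right hac hh hint hexp
  have hval := integral_llr_tilted_right hac hh hexp hint
  have hnn := aux_llr_nonneg ν (μ.tilted h) hac2 hint2
  rw [hval] at hnn
  linarith

lemma aux_eIntegral_of_integrable {X : Type*} [MeasurableSpace X] {g : X → ℝ} {ν : Measure X}
    (hg : Integrable g ν) : eIntegral g ν = ((∫ x, g x ∂ν : ℝ) : EReal) := by
  have h1 : ∫⁻ x, ENNReal.ofReal (g x) ∂ν ≠ ⊤ :=
    ((lintegral_ofReal_le_lintegral_enorm g).trans_lt hg.2).ne
  have h2 : ∫⁻ x, ENNReal.ofReal (-g x) ∂ν ≠ ⊤ :=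
    ((lintegral_ofReal_le_lintegral_enorm (fun x => -g x)).trans_lt hg.neg.2).ne
  rw [eIntegral, aux_coeE _ h1, aux_coeE _ h2, ← EReal.coe_sub,
    ← integral_eq_lintegral_pos_part_sub_lintegral_neg_part hg]

lemma aux_eIntegral_mono {X : Type*} [MeasurableSpace X] {f g : X → ℝ} {ν : Measure X}
    (h : ∀ x, f x ≤ g x) : eIntegral f ν ≤ eIntegral g ν := by
  refine EReal.sub_le_sub ?_ ?_
  · exact_mod_cast lintegral_mono fun x => ENNReal.ofReal_le_ofReal (h x)
  · exact_mod_cast lintegral_mono fun x => ENNReal.ofReal_le_ofReal (neg_le_neg (h x))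

lemma aux_bddBelow {X : Type*} [TopologicalSpace X] [CompactSpace X] {g : X → ℝ}
    (hg : LowerSemicontinuous g) : ∃ c : ℝ, ∀ x, c ≤ g x := by
  set U : ℕ → Set X := fun n => {x | (-(n : ℝ)) < g x} with hU
  have hopen : ∀ n, IsOpen (U n) := fun n => hg.isOpen_preimage _
  have hcover : Set.univ ⊆ ⋃ n, U n := by
    intro x _
    obtain ⟨n, hn⟩ := exists_nat_gt (-(g x))
    exact Set.mem_iUnion.mpr ⟨n, by simp only [U, Set.mem_setOf_eq]; linarith⟩
  obtain ⟨t, ht⟩ := isCompact_univ.elim_finite_subcover U hopen hcover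
  refine ⟨-(t.sup id : ℕ), fun x => ?_⟩
  obtain ⟨n, hnt, hnx⟩ := Set.mem_iUnion₂.mp (ht (Set.mem_univ x))
  have h1 : (n : ℝ) ≤ (t.sup id : ℕ) := by exact_mod_cast Finset.le_sup (f := id) hnt
  have h2 : -((t.sup id : ℕ) : ℝ) ≤ -(n : ℝ) := by linarith
  exact le_of_lt (lt_of_le_of_lt h2 hnx)

lemma aux_integrable_of_bdd {X : Type*} [MeasurableSpace X] {ν : Measure X} [IsFiniteMeasure ν]
    {f : X → ℝ} (hf : Measurable f) {a b : ℝ} (hab : ∀ x, a ≤ f x ∧ f x ≤ b) :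
    Integrable f ν := by
  refine Integrable.mono' (integrable_const (max |a| |b|)) hf.aestronglyMeasurable
    (Filter.Eventually.of_forall fun x => ?_)
  rw [Real.norm_eq_abs, abs_le]
  constructor
  · calc -max |a| |b| ≤ -|a| := by simp
      _ ≤ a := neg_abs_le a
      _ ≤ f x := (hab x).1
  · calc f x ≤ b := (hab x).2
      _ ≤ |b| := le_abs_self b
      _ ≤ max |a| |b| := le_max_right _ _

lemma aux_sup_ofReal_min (a : ℝ) : ⨆ n : ℕ, ENNReal.ofReal (min a n) = ENNReal.ofReal a := by
  refine le_antisymm (iSup_le fun n => ENNReal.ofReal_le_ofReal (min_le_left _ _)) ?_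
  refine le_iSup_of_le ⌈a⌉₊ (le_of_eq ?_)
  rw [min_eq_left (Nat.le_ceil a)]

lemma aux_ofReal_neg_min (a : ℝ) (n : ℕ) :
    ENNReal.ofReal (-(min a n)) = ENNReal.ofReal (-a) := by
  rcases le_total a n with h | h
  · rw [min_eq_left h]
  · rw [min_eq_right h]
    rw [ENNReal.ofReal_eq_zero.mpr (neg_nonpos.mpr (Nat.cast_nonneg n)), eq_comm,
      ENNReal.ofReal_eq_zero]
    have : (0:ℝ) ≤ n := Nat.cast_nonneg n
    linarith

end Aux

open Real

/-- For a lower semicontinuous function `g` on a compact metric space `X` (hence bounded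
below) and a Borel probability measure `μ`,
`sup_ν ( ∫ g dν − H_μ(ν) ) = log ∫ e^g dμ`, the supremum ranging over all Borel
probability measures `ν` with finite relative entropy; both sides lie in `(−∞,+∞]`. -/
theorem iSup_sub_relEntropy_eq_log_integral_exp {X : Type*} [MetricSpace X] [CompactSpace X]
    [MeasurableSpace X] [BorelSpace X]
    (μ : Measure X) [IsProbabilityMeasure μ]
    (g : X → ℝ) (hg : LowerSemicontinuous g) :
    (⨆ (ν : ProbabilityMeasure X) (_ : relEntropy μ (ν : Measure X) ≠ ⊤),
        eIntegral g (ν : Measure X) - ((relEntropy μ (ν : Measure X) : ℝ≥0∞) : EReal))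
      = ENNReal.log (∫⁻ x, ENNReal.ofReal (Real.exp (g x)) ∂μ) := by
  classical
  obtain ⟨c, hc⟩ := aux_bddBelow hg
  have hgm : Measurable g := hg.measurable
  set h : ℕ → X → ℝ := fun n x => min (g x) n with hh
  have hmeas : ∀ n, Measurable (h n) := fun n => hgm.min measurable_const
  have hbd : ∀ n, ∀ x, min c 0 ≤ h n x ∧ h n x ≤ n := fun n x =>
    ⟨le_min ((min_le_left c 0).trans (hc x)) ((min_le_right c 0).trans (Nat.cast_nonneg n)),
      min_le_right _ _⟩
  have hint : ∀ (n : ℕ) (ρ : Measure X) [IsFiniteMeasure ρ], Integrable (h n) ρ :=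
    fun n ρ _ => aux_integrable_of_bdd (hmeas n) (hbd n)
  have hexp_int : ∀ n, ∀ (ρ : Measure X) [IsFiniteMeasure ρ],
      Integrable (fun x => rexp (h n x)) ρ := fun n ρ _ =>
    aux_integrable_of_bdd (measurable_exp.comp (hmeas n)) (a := rexp (min c 0)) (b := rexp n)
      (fun x => ⟨exp_le_exp.mpr (hbd n x).1, exp_le_exp.mpr (hbd n x).2⟩)
  set L : ℝ≥0∞ := ∫⁻ x, ENNReal.ofReal (Real.exp (g x)) ∂μ with hLdef
  set Ln : ℕ → ℝ≥0∞ := fun n => ∫⁻ x, ENNReal.ofReal (rexp (h n x)) ∂μ with hLn_def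
  set Zn : ℕ → ℝ := fun n => ∫ x, rexp (h n x) ∂μ with hZn_def
  have hZn_pos : ∀ n, 0 < Zn n := fun n => integral_exp_pos (hexp_int n μ)
  have hLn : ∀ n, Ln n = ENNReal.ofReal (Zn n) := fun n =>
    (ofReal_integral_eq_lintegral_ofReal (hexp_int n μ)
      (ae_of_all _ fun x => (exp_pos _).le)).symm
  have hlogLn : ∀ n, ENNReal.log (Ln n) = ((Real.log (Zn n) : ℝ) : EReal) := fun n => by
    rw [hLn n, ENNReal.log_ofReal_of_pos (hZn_pos n)]
  have hmin_mono : ∀ x, Monotone fun n : ℕ => h n x := fun x n m hnm =>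
    min_le_min le_rfl (by exact_mod_cast Nat.cast_le.mpr hnm)
  have hLsup : L = ⨆ n, Ln n := by
    have hstep := lintegral_iSup (μ := μ) (f := fun n x => ENNReal.ofReal (rexp (h n x)))
      (fun n => (measurable_exp.comp (hmeas n)).ennreal_ofReal)
      (fun n m hnm x => ENNReal.ofReal_le_ofReal (exp_le_exp.mpr (hmin_mono x hnm)))
    calc L = ∫⁻ x, ⨆ n, ENNReal.ofReal (rexp (h n x)) ∂μ := by
          refine lintegral_congr fun x => ?_
          refine le_antisymm ?_ (iSup_le fun n =>
            ENNReal.ofReal_le_ofReal (exp_le_exp.mpr (min_le_left _ _)))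
          refine le_iSup_of_le ⌈g x⌉₊ (le_of_eq ?_)
          simp only [hh]
          rw [min_eq_left (Nat.le_ceil _)]
      _ = ⨆ n, Ln n := hstep
  refine le_antisymm (iSup₂_le fun ν hν => ?_) ?_
  · -- upper bound
    have hcond : (ν : Measure X) ≪ μ ∧
        Integrable (fun x => Real.log ((ν : Measure X).rnDeriv μ x).toReal) (ν : Measure X) := by
      by_contra hcon
      rw [relEntropy, if_neg hcon] at hν
      exact hν rfl
    obtain ⟨hac, hillr⟩ := hcond
    set K := ∫ x, Real.log ((ν : Measure X).rnDeriv μ x).toReal ∂(ν : Measure X) with hK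
    have hrel : relEntropy μ (ν : Measure X) = ENNReal.ofReal K := by
      rw [relEntropy, if_pos ⟨hac, hillr⟩]
    by_cases hL : L = ⊤
    · rw [hL]
      exact le_top
    · have hexpg_int : Integrable (fun x => rexp (g x)) μ :=
        ⟨(measurable_exp.comp hgm).aestronglyMeasurable, by
          rw [hasFiniteIntegral_iff_ofReal (ae_of_all _ fun x => (exp_pos _).le)]
          exact lt_top_iff_ne_top.mpr hL⟩
      set Z := ∫ x, rexp (g x) ∂μ with hZ
      have hZpos : 0 < Z := integral_exp_pos hexpg_int
      have hLZ : L = ENNReal.ofReal Z :=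
        (ofReal_integral_eq_lintegral_ofReal hexpg_int
          (ae_of_all _ fun x => (exp_pos _).le)).symm
      have hRHS : ENNReal.log L = ((Real.log Z : ℝ) : EReal) := by
        rw [hLZ, ENNReal.log_ofReal_of_pos hZpos]
      have key : ∀ n, ∫ x, h n x ∂(ν : Measure X) ≤ K + Real.log Z := by
        intro n
        have h1 := aux_gibbs (ν : Measure X) μ hac hillr (h n) (hint n _) (hexp_int n μ)
        have h2 : Real.log (Zn n) ≤ Real.log Z :=
          Real.log_le_log (hZn_pos n)
            (integral_mono (hexp_int n μ) hexpg_int fun x =>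
              exp_le_exp.mpr (min_le_left _ _))
        have h3 : ∫ x, llr (ν : Measure X) μ x ∂(ν : Measure X) = K := rfl
        rw [h3] at h1
        calc ∫ x, h n x ∂(ν : Measure X) ≤ K + Real.log (Zn n) := h1
          _ ≤ K + Real.log Z := by linarith
      set A := ∫⁻ x, ENNReal.ofReal (g x) ∂(ν : Measure X) with hA
      set B := ∫⁻ x, ENNReal.ofReal (-g x) ∂(ν : Measure X) with hB
      set An : ℕ → ℝ≥0∞ := fun n => ∫⁻ x, ENNReal.ofReal (h n x) ∂(ν : Measure X) with hAn
      have hBfin : B ≠ ⊤ := by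
        refine ne_top_of_le_ne_top (ne_of_lt ?_)
          (lintegral_mono fun x => ENNReal.ofReal_le_ofReal (neg_le_neg (hc x)))
        rw [lintegral_const]
        exact ENNReal.mul_lt_top ENNReal.ofReal_lt_top (measure_lt_top _ _)
      have hBn : ∀ n, ∫⁻ x, ENNReal.ofReal (-(h n x)) ∂(ν : Measure X) = B := fun n =>
        lintegral_congr fun x => aux_ofReal_neg_min (g x) n
      have hAn_eq : ∀ n, ∫ x, h n x ∂(ν : Measure X) = (An n).toReal - B.toReal := fun n => by
        rw [integral_eq_lintegral_pos_part_sub_lintegral_neg_part (hint n _), hBn n]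
      have hAn_fin : ∀ n, An n ≠ ⊤ := fun n =>
        ((lintegral_ofReal_le_lintegral_enorm _).trans_lt (hint n (ν : Measure X)).2).ne
      have hA_sup : A = ⨆ n, An n := by
        have hstep := lintegral_iSup (μ := (ν : Measure X))
          (f := fun n x => ENNReal.ofReal (h n x)) (fun n => (hmeas n).ennreal_ofReal)
          (fun n m hnm x => ENNReal.ofReal_le_ofReal (hmin_mono x hnm))
        calc A = ∫⁻ x, ⨆ n, ENNReal.ofReal (h n x) ∂(ν : Measure X) :=
              lintegral_congr fun x => (aux_sup_ofReal_min (g x)).symm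
          _ = ⨆ n, An n := hstep
      have hKB0 : 0 ≤ K + Real.log Z + B.toReal := by
        have h1 := key 0
        have h2 := hAn_eq 0
        have h3 : (0:ℝ) ≤ (An 0).toReal := ENNReal.toReal_nonneg
        linarith
      have hAle : A ≤ ENNReal.ofReal (K + Real.log Z + B.toReal) := by
        rw [hA_sup]
        refine iSup_le fun n => ?_
        rw [← ENNReal.ofReal_toReal (hAn_fin n)]
        refine ENNReal.ofReal_le_ofReal ?_
        have h1 := key n
        have h2 := hAn_eq n
        linarith
      have hAfin : A ≠ ⊤ := ne_top_of_le_ne_top ENNReal.ofReal_ne_top hAle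
      have hAreal : A.toReal ≤ K + Real.log Z + B.toReal :=
        ENNReal.toReal_le_of_le_ofReal hKB0 hAle
      have heI : eIntegral g (ν : Measure X) = ((A.toReal - B.toReal : ℝ) : EReal) := by
        rw [eIntegral, ← hA, ← hB, aux_coeE A hAfin, aux_coeE B hBfin, ← EReal.coe_sub]
      rw [heI, hrel, hRHS]
      have hKle : ((K:ℝ) : EReal) ≤ ((ENNReal.ofReal K : ℝ≥0∞) : EReal) := by
        rw [EReal.coe_ennreal_ofReal]
        exact_mod_cast le_max_left K 0
      calc ((A.toReal - B.toReal : ℝ):EReal) - ((ENNReal.ofReal K : ℝ≥0∞) : EReal)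
          ≤ ((A.toReal - B.toReal : ℝ):EReal) - ((K : ℝ):EReal) :=
            EReal.sub_le_sub le_rfl hKle
        _ = ((A.toReal - B.toReal - K : ℝ):EReal) := by rw [← EReal.coe_sub]
        _ ≤ ((Real.log Z : ℝ) : EReal) := by
            exact_mod_cast (by linarith : A.toReal - B.toReal - K ≤ Real.log Z)
  · -- lower bound
    have hchain : ∀ n, ((Real.log (Zn n) : ℝ) : EReal) ≤
        ⨆ (ν : ProbabilityMeasure X) (_ : relEntropy μ (ν : Measure X) ≠ ⊤),
          eIntegral g (ν : Measure X) - ((relEntropy μ (ν : Measure X) : ℝ≥0∞) : EReal) := by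
      intro n
      set ρ : Measure X := μ.tilted (h n) with hρ
      haveI hPρ : IsProbabilityMeasure ρ := isProbabilityMeasure_tilted (hexp_int n μ)
      set νn : ProbabilityMeasure X := ⟨ρ, hPρ⟩ with hνn
      have hacn : ρ ≪ μ := tilted_absolutelyContinuous μ (h n)
      have hlog_ae : (fun x => Real.log (ρ.rnDeriv μ x).toReal)
          =ᵐ[ρ] fun x => h n x - Real.log (Zn n) :=
        hacn.ae_le (log_rnDeriv_tilted_left_self (hexp_int n μ))
      have hillrn : Integrable (fun x => Real.log (ρ.rnDeriv μ x).toReal) ρ :=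
        Integrable.congr ((hint n ρ).sub (integrable_const _)) hlog_ae.symm
      have hIn : ∫ x, Real.log (ρ.rnDeriv μ x).toReal ∂ρ
          = ∫ x, h n x ∂ρ - Real.log (Zn n) := by
        rw [integral_congr_ae hlog_ae, integral_sub (hint n ρ) (integrable_const _),
          integral_const]
        simp
      have hnn : 0 ≤ ∫ x, Real.log (ρ.rnDeriv μ x).toReal ∂ρ :=
        aux_llr_nonneg ρ μ hacn hillrn
      have hrel : relEntropy μ ρ
          = ENNReal.ofReal (∫ x, Real.log (ρ.rnDeriv μ x).toReal ∂ρ) := by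
        rw [relEntropy, if_pos ⟨hacn, hillrn⟩]
      have hreln : relEntropy μ (νn : Measure X) ≠ ⊤ := by
        rw [show ((νn : Measure X)) = ρ from rfl, hrel]
        exact ENNReal.ofReal_ne_top
      refine le_trans ?_ (le_iSup₂_of_le νn hreln (le_refl _))
      have he1 : eIntegral (h n) ρ = ((∫ x, h n x ∂ρ : ℝ) : EReal) :=
        aux_eIntegral_of_integrable (hint n ρ)
      have hmono : eIntegral (h n) ρ ≤ eIntegral g ρ :=
        aux_eIntegral_mono fun x => min_le_left _ _
      have ht0 : 0 ≤ ∫ x, h n x ∂ρ - Real.log (Zn n) := by rw [← hIn]; exact hnn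
      have hcoe : ((νn : Measure X)) = ρ := rfl
      rw [hcoe]
      calc ((Real.log (Zn n) : ℝ) : EReal)
          = ((∫ x, h n x ∂ρ : ℝ) : EReal)
              - ((∫ x, h n x ∂ρ - Real.log (Zn n) : ℝ) : EReal) := by
            rw [← EReal.coe_sub]
            norm_num
        _ ≤ eIntegral g ρ - ((relEntropy μ ρ : ℝ≥0∞) : EReal) := by
            refine EReal.sub_le_sub (he1 ▸ hmono) (le_of_eq ?_)
            rw [hrel, hIn, EReal.coe_ennreal_ofReal, max_eq_left ht0]
    obtain ⟨M, hM⟩ := ENNReal.log_surjective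
      (⨆ (ν : ProbabilityMeasure X) (_ : relEntropy μ (ν : Measure X) ≠ ⊤),
        eIntegral g (ν : Measure X) - ((relEntropy μ (ν : Measure X) : ℝ≥0∞) : EReal))
    have hLnM : ∀ n, Ln n ≤ M := fun n => by
      rw [← ENNReal.log_le_log_iff, hM, hlogLn n]
      exact hchain n
    have hLM : L ≤ M := by
      rw [hLsup]
      exact iSup_le hLnM
    rw [← hM, ENNReal.log_le_log_iff]
    exact hLM
end

section
/- Let μ be a measure on a measurable space X, let χ be a weight with conjugate weight χ*, and let A ≥ 1 be a real number. Let f ≥ 0 be a measurable function with ∫ χ(f) dμ ≤ A, and let ν := f·μ be the measure with density f with respect to μ. Then for every measurable real-valued function g and every b > 0 such that ∫ χ*(|g|/b) dμ ≤ 1, one has ∫_X |g| dν ≤ 2 A b (the integrals being taken in [0, +∞]). -/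
open MeasureTheory ENNReal

/-- The conjugate weight `χ*` of a weight `χ : [0,∞) → [0,∞)`, defined by
`χ*(t) = sup_{s ≥ 0} (s·t − χ(s))`, with values in `[0,+∞]`. -/
noncomputable def conjWeight (χ : ℝ → ℝ) (t : ℝ) : ℝ≥0∞ :=
  ⨆ (s : ℝ) (_ : 0 ≤ s), ENNReal.ofReal (s * t - χ s)

/-- If `χ` is a weight, `A ≥ 1`, `f ≥ 0` is measurable with `∫ χ(f) dμ ≤ A`, and
`ν := f·μ`, then for every measurable `g` and every `b > 0` with `∫ χ*(|g|/b) dμ ≤ 1`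
one has `∫ |g| dν ≤ 2 A b`. -/
theorem lintegral_abs_withDensity_le {X : Type*} [MeasurableSpace X] (μ : Measure X)
    (χ : ℝ → ℝ) (hχconv : ConvexOn ℝ (Set.Ici 0) χ)
    (hχmono : MonotoneOn χ (Set.Ici 0))
    (hχ0 : χ 0 = 0) (hχpos : ∀ s : ℝ, 0 < s → 0 < χ s)
    (A : ℝ) (hA : 1 ≤ A)
    (f : X → ℝ) (hf : Measurable f) (hf0 : ∀ x, 0 ≤ f x)
    (hfA : ∫⁻ x, ENNReal.ofReal (χ (f x)) ∂μ ≤ ENNReal.ofReal A)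
    (g : X → ℝ) (hg : Measurable g)
    (b : ℝ) (hb : 0 < b)
    (hgb : ∫⁻ x, conjWeight χ (|g x| / b) ∂μ ≤ 1) :
    ∫⁻ x, ENNReal.ofReal |g x| ∂(μ.withDensity fun x => ENNReal.ofReal (f x)) ≤
      ENNReal.ofReal (2 * A * b) := by

  have hmeas : Measurable fun x => ENNReal.ofReal (χ (f x)) := by
    have hmono : Monotone fun s => χ (max s 0) := fun a c hac =>
      hχmono (Set.mem_Ici.2 (le_max_right a 0)) (Set.mem_Ici.2 (le_max_right c 0))
        (max_le_max hac le_rfl)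
    have : (fun x => ENNReal.ofReal (χ (f x))) =
        fun x => ENNReal.ofReal (χ (max (f x) 0)) := by
      funext x; rw [max_eq_left (hf0 x)]
    rw [this]
    exact ENNReal.measurable_ofReal.comp (hmono.measurable.comp hf)
  have key : ∀ x, ENNReal.ofReal (f x * |g x|) ≤
      ENNReal.ofReal b * (ENNReal.ofReal (χ (f x)) + conjWeight χ (|g x| / b)) := by
    intro x
    have hb' : (0:ℝ) ≤ b := hb.le
    have h1 : f x * |g x| = b * (f x * (|g x| / b)) := by
      field_simp
    rw [h1, ENNReal.ofReal_mul hb']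
    refine mul_le_mul_right ?_ _
    have h2 : conjWeight χ (|g x| / b) ≥
        ENNReal.ofReal (f x * (|g x| / b) - χ (f x)) :=
      le_iSup_of_le (f x) (le_iSup_of_le (hf0 x) le_rfl)
    calc ENNReal.ofReal (f x * (|g x| / b))
        = ENNReal.ofReal (χ (f x) + (f x * (|g x| / b) - χ (f x))) := by ring_nf
      _ ≤ ENNReal.ofReal (χ (f x)) + ENNReal.ofReal (f x * (|g x| / b) - χ (f x)) :=
          ENNReal.ofReal_add_le
      _ ≤ ENNReal.ofReal (χ (f x)) + conjWeight χ (|g x| / b) := add_le_add_right h2 _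
  calc ∫⁻ x, ENNReal.ofReal |g x| ∂(μ.withDensity fun x => ENNReal.ofReal (f x))
      = ∫⁻ x, ENNReal.ofReal (f x) * ENNReal.ofReal |g x| ∂μ := by
        rw [lintegral_withDensity_eq_lintegral_mul μ
          (show Measurable fun x => ENNReal.ofReal (f x) from hf.ennreal_ofReal)
          (show Measurable fun x => ENNReal.ofReal |g x| from hg.abs.ennreal_ofReal)]
        rfl
    _ = ∫⁻ x, ENNReal.ofReal (f x * |g x|) ∂μ := by
        congr 1; funext x; rw [ENNReal.ofReal_mul (hf0 x)]
    _ ≤ ∫⁻ x, ENNReal.ofReal b * (ENNReal.ofReal (χ (f x)) + conjWeight χ (|g x| / b)) ∂μ :=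
        lintegral_mono key
    _ = ENNReal.ofReal b * ∫⁻ x, (ENNReal.ofReal (χ (f x)) + conjWeight χ (|g x| / b)) ∂μ :=
        lintegral_const_mul' _ _ ENNReal.ofReal_ne_top
    _ = ENNReal.ofReal b * ((∫⁻ x, ENNReal.ofReal (χ (f x)) ∂μ) +
          ∫⁻ x, conjWeight χ (|g x| / b) ∂μ) := by
        rw [lintegral_add_left hmeas]
    _ ≤ ENNReal.ofReal b * (ENNReal.ofReal A + 1) := by
        exact mul_le_mul_right (add_le_add hfA hgb) _
    _ ≤ ENNReal.ofReal (2 * A * b) := by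
        rw [show (1:ℝ≥0∞) = ENNReal.ofReal 1 by simp, ← ENNReal.ofReal_add (by linarith) (by norm_num),
          ← ENNReal.ofReal_mul hb.le]
        apply ENNReal.ofReal_le_ofReal
        nlinarith
end

section
/- Let H > 0 be a real number and define h : [0,∞) → [0,∞) by h(t) = t + √(H·t). Then for every natural number p and every real t with 0 ≤ t ≤ 2^{−2^{p+1}}·H, the p-th iterate of h satisfies h^[p](t) ≤ 4 · H^{1 − 1/2^p} · t^{1/2^p}. -/
lemma iterate_sqrt_bound_aux (H : ℝ) (hH : 0 < H) (p : ℕ) (t : ℝ)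
    (htpos : 0 < t) (ht : t ≤ H / 2 ^ 2 ^ (p + 1)) :
    (fun s : ℝ => s + Real.sqrt (H * s))^[p] t ≤
      4 * H ^ ((1 : ℝ) - 1 / 2 ^ p) * t ^ ((1 : ℝ) / 2 ^ p) := by
  induction p generalizing t with
  | zero =>
    simp only [Function.iterate_zero, id_eq, pow_zero]
    norm_num
    linarith
  | succ p ih =>
    have h2 : (0:ℝ) < 2 := two_pos
    set a : ℝ := 1 / 2 ^ p with ha
    have hapos : 0 < a := by positivity
    have hmono : Monotone (fun s : ℝ => s + Real.sqrt (H * s)) := by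
      intro x y hxy
      dsimp only
      gcongr
    have ht' : t ≤ H / 2 ^ 2 ^ (p + 1) := by
      refine ht.trans ?_
      have hle : (2:ℝ) ^ 2 ^ (p+1) ≤ 2 ^ 2 ^ (p+1+1) :=
        pow_le_pow_right₀ one_le_two (Nat.pow_le_pow_right (by norm_num) (by omega))
      exact div_le_div_of_nonneg_left hH.le (by positivity) hle
    have hB := ih t htpos ht'
    set B : ℝ := 4 * H ^ ((1:ℝ) - a) * t ^ a with hBdef
    have hBpos : 0 < B := by positivity
    -- square root computation
    have e1 : (H ^ ((1:ℝ) - a/2))^2 = H ^ ((2:ℝ) - a) := by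
      rw [sq, ← Real.rpow_add hH]; congr 1; ring
    have e2 : (t ^ (a/2))^2 = t ^ a := by
      rw [sq, ← Real.rpow_add htpos]; congr 1; ring
    have e3 : H * H ^ ((1:ℝ) - a) = H ^ ((2:ℝ) - a) := by
      nth_rewrite 1 [← Real.rpow_one H]
      rw [← Real.rpow_add hH]; congr 1; ring
    have hsq : (2 * H ^ ((1:ℝ) - a/2) * t ^ (a/2))^2 = H * B := by
      rw [mul_pow, mul_pow, e1, e2, hBdef,
        show H * (4 * H ^ ((1:ℝ) - a) * t ^ a) = 4 * (H * H ^ ((1:ℝ) - a)) * t ^ a by ring,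
        e3]
      norm_num
    have hsqrt : Real.sqrt (H * B) = 2 * H ^ ((1:ℝ) - a/2) * t ^ (a/2) := by
      rw [← hsq, Real.sqrt_sq (by positivity)]
    -- key : 2 * t^(a/2) ≤ H^(a/2)
    have hpow2 : ((2:ℝ) ^ (2 ^ (p+1) : ℕ)) ^ (a/2) = 2 := by
      rw [← Real.rpow_natCast (2:ℝ) (2 ^ (p+1)), ← Real.rpow_mul (by norm_num)]
      rw [show ((2 ^ (p+1) : ℕ) : ℝ) * (a/2) = 1 by
        push_cast [ha]
        rw [pow_succ]
        field_simp]
      exact Real.rpow_one 2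
    have key : 2 * t ^ (a/2) ≤ H ^ (a/2) := by
      have h1 : t ^ (a/2) ≤ ((H / 2 ^ 2 ^ (p+1) : ℝ)) ^ (a/2) :=
        Real.rpow_le_rpow htpos.le ht' (by positivity)
      have h2' : ((H / 2 ^ 2 ^ (p+1) : ℝ)) ^ (a/2) = H ^ (a/2) / 2 := by
        rw [Real.div_rpow hH.le (by positivity), hpow2]
      rw [h2'] at h1
      linarith
    -- splitting
    have splitH : H ^ ((1:ℝ) - a) * H ^ (a/2) = H ^ ((1:ℝ) - a/2) := by
      rw [← Real.rpow_add hH]; congr 1; ring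
    have splitT : t ^ a = t ^ (a/2) * t ^ (a/2) := by
      rw [← Real.rpow_add htpos]; congr 1; ring
    have hBle : B ≤ 2 * H ^ ((1:ℝ) - a/2) * t ^ (a/2) := by
      have hH1 : (0:ℝ) < H ^ ((1:ℝ) - a) := by positivity
      have hT1 : (0:ℝ) < t ^ (a/2) := by positivity
      calc B = 4 * H ^ ((1:ℝ) - a) * (t ^ (a/2) * t ^ (a/2)) := by rw [hBdef, splitT]
        _ ≤ 4 * H ^ ((1:ℝ) - a) * (t ^ (a/2) * (H ^ (a/2) / 2)) := by
            gcongr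
            linarith
        _ = 2 * (H ^ ((1:ℝ) - a) * H ^ (a/2)) * t ^ (a/2) := by ring
        _ = 2 * H ^ ((1:ℝ) - a/2) * t ^ (a/2) := by rw [splitH]
    -- put it together
    have hexp : (1:ℝ) / 2 ^ (p+1) = a / 2 := by
      rw [ha, pow_succ]; ring
    rw [Function.iterate_succ_apply', hexp]
    calc (fun s : ℝ => s + Real.sqrt (H * s)) ((fun s : ℝ => s + Real.sqrt (H * s))^[p] t)
        ≤ (fun s : ℝ => s + Real.sqrt (H * s)) B := hmono hB
      _ = B + Real.sqrt (H * B) := rfl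
      _ ≤ 2 * H ^ ((1:ℝ) - a/2) * t ^ (a/2) + 2 * H ^ ((1:ℝ) - a/2) * t ^ (a/2) := by
          rw [hsqrt]; linarith
      _ = 4 * H ^ ((1:ℝ) - a/2) * t ^ (a/2) := by ring

/-- Let `H > 0` and `h(t) = t + √(H·t)`. Then for every natural number `p` and every
real `t` with `0 ≤ t ≤ 2^{−2^{p+1}}·H`, the `p`-th iterate of `h` satisfies
`h^[p](t) ≤ 4 · H^{1 − 1/2^p} · t^{1/2^p}`. -/
theorem iterate_sqrt_bound (H : ℝ) (hH : 0 < H) (p : ℕ) (t : ℝ)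
    (ht0 : 0 ≤ t) (ht : t ≤ H / 2 ^ 2 ^ (p + 1)) :
    (fun s : ℝ => s + Real.sqrt (H * s))^[p] t ≤
      4 * H ^ ((1 : ℝ) - 1 / 2 ^ p) * t ^ ((1 : ℝ) / 2 ^ p) := by
  rcases ht0.eq_or_lt with rfl | htpos
  · have hfix : (fun s : ℝ => s + Real.sqrt (H * s))^[p] 0 = 0 :=
      Function.iterate_fixed (by simp) p
    rw [hfix, Real.zero_rpow (by positivity)]
    simp
  · exact iterate_sqrt_bound_aux H hH p t htpos ht
end
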